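/- Crucial lemma for PIDE (Lemma 2.1). Let F : ℝ × ℝ^N × ℝ^N × S_N × ℝ → ℝ be continuous and elliptic, and let Φ, ψ : ℝ^N → ℝ be bounded C² functions. Let K ⊂ ℝ^N be compact and T > 0. Then there exists a function o : (0,∞) → ℝ with o(ε)/ε → 0 as ε → 0⁺, depending only on F, Φ, ψ, K, T, ν and R but not on t, x, y, such that for every ε > 0, every t ∈ [0,T] and every x ∈ K there exists y in the closed ball of radius R around x with ψ(y) + Φ(x) − Φ(y) − ε F(t,x,DΦ(x),D²Φ(x),I_R[x,Φ]) ≤ ψ(x) − ε F(t,x,Dψ(x),D²ψ(x),I_R[x,ψ]) + o(ε). -/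

import Mathlib

open MeasureTheory Metric Set Filter Topology RealInnerProductSpace

noncomputable section

/-- ℝ^N. -/
abbrev Euc (N : ℕ) := EuclideanSpace ℝ (Fin N)

/-- Symmetric matrices `S_N` are modelled as (continuous) bilinear forms on ℝ^N. -/
abbrev Bil (N : ℕ) := Euc N →L[ℝ] Euc N →L[ℝ] ℝ

/-- The Hessian `D²Φ(x)` as a bilinear form. -/
def hess {N : ℕ} (Φ : Euc N → ℝ) (x : Euc N) : Bil N :=
  fderiv ℝ (fun y => fderiv ℝ Φ y) x

/-- Ellipticity of `F`: `F(t,x,p,A,l) ≥ F(t,x,p,B,m)` whenever `A ≤ B` (as quadratic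
forms) and `l ≤ m`. -/
def Elliptic {N : ℕ} (F : ℝ → Euc N → Euc N → Bil N → ℝ → ℝ) : Prop :=
  ∀ (t : ℝ) (x p : Euc N) (A B : Bil N) (l m : ℝ),
    (∀ v, A v v ≤ B v v) → l ≤ m → F t x p B m ≤ F t x p A l

/-- Joint continuity of `F` in all its variables. -/
def ContinuousF {N : ℕ} (F : ℝ → Euc N → Euc N → Bil N → ℝ → ℝ) : Prop :=
  Continuous fun q : ℝ × Euc N × Euc N × Bil N × ℝ =>
    F q.1 q.2.1 q.2.2.1 q.2.2.2.1 q.2.2.2.2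

/-- The (truncated) Lévy operator
`I[x,Φ] = ∫ (Φ(x+z) − Φ(x) − DΦ(x)·z 1_B(z)) ν(dz)`. -/
def levyOp {N : ℕ} (ν : Measure (Euc N)) (Φ : Euc N → ℝ) (x : Euc N) : ℝ :=
  ∫ z, (Φ (x + z) - Φ x -
    (Metric.ball (0 : Euc N) 1).indicator (fun w => ⟪gradient Φ x, w⟫) z) ∂ν

/-- `ν` is a symmetric Lévy measure supported in `B_R(0)`, with
`∫_B |z|² ν(dz) < ∞` and `ν(ℝ^N ∖ B) < ∞`. -/
def LevyMeasure {N : ℕ} (R : ℝ) (ν : Measure (Euc N)) : Prop :=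
  ν.map (fun z => -z) = ν ∧
  ν ((Metric.ball (0 : Euc N) R)ᶜ) = 0 ∧
  (∫⁻ z in Metric.ball (0 : Euc N) 1, ENNReal.ofReal (‖z‖ ^ 2) ∂ν) < ⊤ ∧
  ν ((Metric.ball (0 : Euc N) 1)ᶜ) < ⊤

/-- Bounded `C²` function. -/
def BoundedC2 {N : ℕ} (Φ : Euc N → ℝ) : Prop :=
  ContDiff ℝ 2 Φ ∧ ∃ M, ∀ y, |Φ y| ≤ M

/-! ### Auxiliary lemmas -/

section Aux

variable {N : ℕ}

lemma inner_gradient_eq (f : Euc N → ℝ) (x w : Euc N) :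
    ⟪gradient f x, w⟫ = fderiv ℝ f x w := by
  simp [gradient, InnerProductSpace.toDual_symm_apply]

lemma hess_eq (Φ : Euc N → ℝ) : hess Φ = fderiv ℝ (fderiv ℝ Φ) := rfl

lemma continuous_hess {Φ : Euc N → ℝ} (h : ContDiff ℝ 2 Φ) : Continuous (hess Φ) :=
  (h.fderiv_right (m := 1) (by norm_num)).continuous_fderiv one_ne_zero

lemma continuous_gradient {Φ : Euc N → ℝ} (h : ContDiff ℝ 2 Φ) :
    Continuous (fun x => gradient Φ x) := by
  have := (h.continuous_fderiv (by norm_num))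
  exact (InnerProductSpace.toDual ℝ (Euc N)).symm.continuous.comp this

/-- second-order Taylor bound on a segment -/
lemma taylor_two_bound {Φ : Euc N → ℝ} (hΦ : ContDiff ℝ 2 Φ) {x z : Euc N} {L : ℝ}
    (hL : ∀ w ∈ segment ℝ x (x + z), ‖hess Φ w‖ ≤ L) :
    |Φ (x + z) - Φ x - fderiv ℝ Φ x z| ≤ L * ‖z‖ ^ 2 := by
  have hdiff : Differentiable ℝ Φ := hΦ.differentiable (by norm_num)
  have hdΦ : Differentiable ℝ (fderiv ℝ Φ) :=
    (hΦ.fderiv_right (m := 1) (by norm_num)).differentiable one_ne_zero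
  have hseg : segment ℝ x (x + z) ⊆ closedBall x ‖z‖ := by
    apply (convex_closedBall x ‖z‖).segment_subset
    · exact mem_closedBall_self (norm_nonneg _)
    · simp [mem_closedBall, dist_eq_norm]
  have hcv : Convex ℝ (segment ℝ x (x + z)) := convex_segment _ _
  have step1 : ∀ w ∈ segment ℝ x (x + z), ‖fderiv ℝ Φ w - fderiv ℝ Φ x‖ ≤ L * ‖z‖ := by
    intro w hw
    have h1 : ‖fderiv ℝ Φ w - fderiv ℝ Φ x‖ ≤ L * ‖w - x‖ :=
      hcv.norm_image_sub_le_of_norm_fderiv_le (fun y _ => hdΦ y)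
        (fun y hy => by rw [← hess_eq]; exact hL y hy) (left_mem_segment ℝ x (x+z)) hw
    have h2 : ‖w - x‖ ≤ ‖z‖ := by
      have := hseg hw; rw [mem_closedBall, dist_eq_norm] at this; exact this
    have hL0 : 0 ≤ L :=
      le_trans (norm_nonneg (hess Φ x)) (hL x (left_mem_segment ℝ x (x+z)))
    calc ‖fderiv ℝ Φ w - fderiv ℝ Φ x‖ ≤ L * ‖w - x‖ := h1
      _ ≤ L * ‖z‖ := by nlinarith
  have main : ‖Φ (x + z) - Φ x - (fderiv ℝ Φ x) ((x + z) - x)‖ ≤ (L * ‖z‖) * ‖(x + z) - x‖ :=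
    hcv.norm_image_sub_le_of_norm_fderiv_le' (fun y _ => hdiff y) step1
      (left_mem_segment ℝ x (x+z)) (right_mem_segment ℝ x (x+z))
  simp only [add_sub_cancel_left] at main
  rw [Real.norm_eq_abs] at main
  calc |Φ (x + z) - Φ x - fderiv ℝ Φ x z| ≤ (L * ‖z‖) * ‖z‖ := main
    _ = L * ‖z‖ ^ 2 := by ring

/-- Second derivative test at a local minimum. -/
lemma hess_nonneg_of_isLocalMin {χ : Euc N → ℝ} (hχ : ContDiff ℝ 2 χ) {x : Euc N}
    (hmin : IsLocalMin χ x) (v : Euc N) : 0 ≤ hess χ x v v := by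
  have hdiff : Differentiable ℝ χ := hχ.differentiable (by norm_num)
  have hdχ : Differentiable ℝ (fderiv ℝ χ) :=
    (hχ.fderiv_right (m := 1) (by norm_num)).differentiable one_ne_zero
  set line : ℝ → Euc N := fun s => x + s • v with hline
  have hlineD : ∀ s : ℝ, HasDerivAt line v s := by
    intro s
    have : HasDerivAt (fun y : ℝ => y • v) ((1:ℝ) • v) s := (hasDerivAt_id s).smul_const v
    simpa [hline, one_smul] using this.const_add x
  have hline0 : line 0 = x := by simp [hline]
  set g : ℝ → ℝ := fun s => χ (line s) with hg
  set g1 : ℝ → ℝ := fun s => fderiv ℝ χ (line s) v with hg1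
  set g2 : ℝ → ℝ := fun s => hess χ (line s) v v with hg2
  have hgd : ∀ s, HasDerivAt g (g1 s) s := fun s =>
    ((hdiff (line s)).hasFDerivAt).comp_hasDerivAt s (hlineD s)
  have hg1d : ∀ s, HasDerivAt g1 (g2 s) s := by
    intro s
    have h1 : HasDerivAt (fun u => fderiv ℝ χ (line u)) (hess χ (line s) v) s :=
      ((hdχ (line s)).hasFDerivAt).comp_hasDerivAt s (hlineD s)
    have h2 := (ContinuousLinearMap.apply ℝ ℝ v).hasFDerivAt.comp_hasDerivAt s h1
    exact h2
  have hg2c : Continuous g2 := by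
    have hc : Continuous fun s => hess χ (line s) :=
      (continuous_hess hχ).comp (by continuity)
    exact (hc.clm_apply continuous_const).clm_apply continuous_const
  have hgmin : IsLocalMin g 0 := by
    have hcont : ContinuousAt line 0 := (by continuity : Continuous line).continuousAt
    have := hcont.eventually (by rw [hline0]; exact hmin)
    simpa [IsLocalMin, IsMinFilter, hg, hline0] using this
  have hg10 : g1 0 = 0 := by
    have := hgmin.deriv_eq_zero
    rwa [(hgd 0).deriv] at this
  have key : 0 ≤ g2 0 := by
    by_contra hneg
    push_neg at hneg
    obtain ⟨r, hr, hball⟩ : ∃ r > 0, ∀ s : ℝ, |s| < r → g2 s < 0 := by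
      have := hg2c.continuousAt (x := 0)
      rw [Metric.continuousAt_iff] at this
      obtain ⟨δ, hδ, hd⟩ := this (-(g2 0)) (by linarith)
      exact ⟨δ, hδ, fun s hs => by
        have := hd (by simpa [Real.dist_eq] using hs)
        rw [Real.dist_eq] at this
        cases abs_sub_lt_iff.1 this with
        | intro h1 h2 => linarith⟩
    obtain ⟨r2, hr2, hmin2⟩ := Metric.eventually_nhds_iff_ball.1 hgmin
    set s₀ : ℝ := min r r2 / 2 with hs₀
    have hs₀pos : 0 < s₀ := by positivity
    have hs₀r : s₀ < r := by
      have : min r r2 ≤ r := min_le_left _ _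
      linarith
    have hs₀r2 : s₀ < r2 := by
      have : min r r2 ≤ r2 := min_le_right _ _
      linarith
    have hgs₀ : g 0 ≤ g s₀ := hmin2 s₀ (by simp [Real.dist_eq, abs_of_pos hs₀pos]; linarith)
    obtain ⟨c, hc, hceq⟩ := exists_deriv_eq_slope g hs₀pos
      (fun s _ => (hgd s).differentiableAt.continuousAt.continuousWithinAt)
      (fun s _ => (hgd s).differentiableAt.differentiableWithinAt)
    have hc0 : (0:ℝ) < c := hc.1
    have hg1c : 0 ≤ g1 c := by
      rw [(hgd c).deriv] at hceq
      rw [hceq, sub_zero]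
      apply div_nonneg (by linarith) (by linarith)
    obtain ⟨d, hd, hdeq⟩ := exists_deriv_eq_slope g1 hc0
      (fun s _ => (hg1d s).differentiableAt.continuousAt.continuousWithinAt)
      (fun s _ => (hg1d s).differentiableAt.differentiableWithinAt)
    rw [(hg1d d).deriv] at hdeq
    have hg2d : g2 d < 0 := by
      apply hball
      rw [abs_of_pos hd.1]
      linarith [hd.2, hc.2]
    rw [hdeq, hg10] at hg2d
    have : 0 ≤ (g1 c - 0) / (c - 0) := by
      rw [sub_zero, sub_zero]
      positivity
    linarith
  simpa [hg2, hline0] using key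

/-- The integrand of the Lévy operator. -/
def lint (Φ : Euc N → ℝ) (x z : Euc N) : ℝ :=
  Φ (x + z) - Φ x - (Metric.ball (0 : Euc N) 1).indicator (fun w => ⟪gradient Φ x, w⟫) z

lemma levyOp_eq (ν : Measure (Euc N)) (Φ : Euc N → ℝ) (x : Euc N) :
    levyOp ν Φ x = ∫ z, lint Φ x z ∂ν := rfl

lemma lint_aesm (ν : Measure (Euc N)) {Φ : Euc N → ℝ} (hΦ : ContDiff ℝ 2 Φ) (x : Euc N) :
    AEStronglyMeasurable (lint Φ x) ν := by
  have h1 : Continuous (fun z : Euc N => Φ (x + z) - Φ x) :=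
    (hΦ.continuous.comp (by continuity)).sub continuous_const
  have h2 : StronglyMeasurable ((Metric.ball (0 : Euc N) 1).indicator
      (fun w => ⟪gradient Φ x, w⟫)) :=
    ((continuous_const.inner continuous_id).stronglyMeasurable).indicator measurableSet_ball
  exact ((h1.stronglyMeasurable.sub h2).aestronglyMeasurable)

/-- The dominating function. -/
def domb (L M : ℝ) (z : Euc N) : ℝ :=
  (Metric.ball (0 : Euc N) 1).indicator (fun z => L * ‖z‖ ^ 2) z +
  ((Metric.ball (0 : Euc N) 1)ᶜ).indicator (fun _ => 2 * M) z

lemma domb_integrable {R : ℝ} {ν : Measure (Euc N)} (hν : LevyMeasure R ν)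
    {L M : ℝ} : Integrable (domb L M) ν := by
  apply Integrable.add
  · rw [integrable_indicator_iff measurableSet_ball]
    have hsq : IntegrableOn (fun z : Euc N => ‖z‖ ^ 2) (Metric.ball (0:Euc N) 1) ν := by
      refine ⟨(continuous_norm.pow 2).aestronglyMeasurable, ?_⟩
      rw [hasFiniteIntegral_iff_ofReal (Eventually.of_forall (fun z => by positivity))]
      exact hν.2.2.1
    exact hsq.const_mul L
  · rw [integrable_indicator_iff measurableSet_ball.compl]
    exact integrableOn_const hν.2.2.2.ne

lemma lint_bound {Φ : Euc N → ℝ} (hΦ : ContDiff ℝ 2 Φ) {M : ℝ} (hM : ∀ y, |Φ y| ≤ M)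
    (x₀ : Euc N) :
    ∃ L, ∀ x ∈ closedBall x₀ 1, ∀ z, ‖lint Φ x z‖ ≤ domb L M z := by
  obtain ⟨L, hL⟩ := (isCompact_closedBall x₀ 2).exists_bound_of_continuousOn
    (f := hess Φ) (continuous_hess hΦ).continuousOn
  refine ⟨L, fun x hx z => ?_⟩
  by_cases hz : z ∈ Metric.ball (0 : Euc N) 1
  · have hz1 : ‖z‖ < 1 := by simpa [mem_ball, dist_eq_norm] using hz
    have hseg : segment ℝ x (x + z) ⊆ closedBall x₀ 2 := by
      have h1 : segment ℝ x (x + z) ⊆ closedBall x ‖z‖ := by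
        apply (convex_closedBall x ‖z‖).segment_subset
        · exact mem_closedBall_self (norm_nonneg _)
        · simp [mem_closedBall, dist_eq_norm]
      intro w hw
      have h2 := h1 hw
      rw [mem_closedBall]
      rw [mem_closedBall] at hx h2
      have := dist_triangle w x x₀
      linarith
    have htay := taylor_two_bound hΦ (x := x) (z := z) (L := L)
      (fun w hw => hL w (hseg hw))
    rw [lint, Set.indicator_of_mem hz, inner_gradient_eq]
    rw [domb, Set.indicator_of_mem hz, Set.indicator_of_notMem (by simpa using hz)]
    simpa [Real.norm_eq_abs] using htay
  · rw [lint, Set.indicator_of_notMem hz, domb, Set.indicator_of_notMem hz,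
      Set.indicator_of_mem (by simpa using hz)]
    have := hM (x + z); have := hM x
    rw [Real.norm_eq_abs]
    rw [sub_zero]
    calc |Φ (x+z) - Φ x| ≤ |Φ (x+z)| + |Φ x| := abs_sub _ _
      _ ≤ 2 * M + 0 := by linarith
      _ = 0 + 2 * M := by ring

lemma lint_integrable {R : ℝ} {ν : Measure (Euc N)} (hν : LevyMeasure R ν)
    {Φ : Euc N → ℝ} (hΦ : ContDiff ℝ 2 Φ) {M : ℝ} (hM : ∀ y, |Φ y| ≤ M) (x : Euc N) :
    Integrable (lint Φ x) ν := by
  obtain ⟨L, hL⟩ := lint_bound hΦ hM x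
  exact (domb_integrable hν (L := L) (M := M)).mono (lint_aesm ν hΦ x)
    (Eventually.of_forall fun z =>
      le_trans (hL x (mem_closedBall_self zero_le_one) z) (le_abs_self _))

lemma levyOp_continuous {R : ℝ} {ν : Measure (Euc N)} (hν : LevyMeasure R ν)
    {Φ : Euc N → ℝ} (hΦ : ContDiff ℝ 2 Φ) {M : ℝ} (hM : ∀ y, |Φ y| ≤ M) :
    Continuous (levyOp ν Φ) := by
  rw [continuous_iff_continuousAt]
  intro x₀
  obtain ⟨L, hL⟩ := lint_bound hΦ hM x₀
  have h := continuousAt_of_dominated (F := fun x z => lint Φ x z) (x₀ := x₀)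
    (bound := domb L M) (μ := ν)
    (Eventually.of_forall fun x => lint_aesm ν hΦ x)
    ?_ (domb_integrable hν) ?_
  · exact h
  · filter_upwards [Metric.ball_mem_nhds x₀ zero_lt_one] with x hx
    exact Eventually.of_forall fun z => hL x (ball_subset_closedBall hx) z
  · refine Eventually.of_forall fun z => ?_
    apply ContinuousAt.sub
    · exact ((hΦ.continuous.comp (by continuity : Continuous fun x : Euc N => x + z)).sub
        hΦ.continuous).continuousAt
    · by_cases hz : z ∈ Metric.ball (0 : Euc N) 1
      · simp only [Set.indicator_of_mem hz]
        exact (((continuous_gradient hΦ).inner continuous_const).continuousAt)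
      · simp only [Set.indicator_of_notMem hz]
        exact continuousAt_const

/-- inf of χ over the closed ball of radius R around x. -/
def mfun (χ : Euc N → ℝ) (R : ℝ) (x : Euc N) : ℝ :=
  sInf ((fun z => χ (x + z)) '' closedBall (0 : Euc N) R)

variable {χ : Euc N → ℝ} {R : ℝ}

lemma mfun_le (hχ : Continuous χ) (x : Euc N) {z : Euc N}
    (hz : z ∈ closedBall (0 : Euc N) R) : mfun χ R x ≤ χ (x + z) := by
  apply csInf_le
  · exact (((isCompact_closedBall _ _).image (hχ.comp (by continuity))).bddBelow)
  · exact mem_image_of_mem _ hz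

lemma le_mfun (hR : 0 ≤ R) (x : Euc N) {c : ℝ}
    (h : ∀ z ∈ closedBall (0 : Euc N) R, c ≤ χ (x + z)) : c ≤ mfun χ R x := by
  apply le_csInf
  · exact (nonempty_closedBall.2 hR).image _
  · rintro b ⟨z, hz, rfl⟩; exact h z hz

lemma mfun_le_self (hχ : Continuous χ) (hR : 0 ≤ R) (x : Euc N) : mfun χ R x ≤ χ x := by
  simpa using mfun_le hχ x (mem_closedBall_self hR)

lemma exists_min (hχ : Continuous χ) (hR : 0 ≤ R) (x : Euc N) :
    ∃ y ∈ closedBall x R, χ y = mfun χ R x := by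
  obtain ⟨z₀, hz₀, hmin⟩ := (isCompact_closedBall (0:Euc N) R).exists_isMinOn
    (nonempty_closedBall.2 hR) ((hχ.comp (by continuity)).continuousOn
      : ContinuousOn (fun z => χ (x + z)) _)
  refine ⟨x + z₀, ?_, le_antisymm ?_ ?_⟩
  · rw [mem_closedBall, dist_eq_norm]
    simpa using mem_closedBall_zero_iff.1 hz₀
  · apply le_mfun hR; intro z hz; exact hmin hz
  · exact mfun_le hχ x hz₀

lemma isMinOn_of_dfun_eq_zero (hχ : Continuous χ) {x : Euc N}
    (h : χ x - mfun χ R x = 0) : IsMinOn χ (closedBall x R) x := by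
  intro w hw
  have hmem : w - x ∈ closedBall (0 : Euc N) R := by
    rw [mem_closedBall_zero_iff]
    rw [mem_closedBall, dist_eq_norm] at hw
    simpa using hw
  have := mfun_le hχ x hmem
  simp only [add_sub_cancel] at this
  simp only [mem_setOf_eq]
  linarith

lemma mfun_continuous (hχ : Continuous χ) (hR : 0 ≤ R) : Continuous (mfun χ R) := by
  rw [continuous_iff_continuousAt]
  intro x₀
  rw [Metric.continuousAt_iff]
  intro ε hε
  have hc : IsCompact (closedBall x₀ (R + 1)) := isCompact_closedBall _ _
  have huc : UniformContinuousOn χ (closedBall x₀ (R + 1)) :=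
    hc.uniformContinuousOn_of_continuous hχ.continuousOn
  rw [Metric.uniformContinuousOn_iff] at huc
  obtain ⟨δ, hδ, hd⟩ := huc (ε / 2) (by linarith)
  refine ⟨min δ 1, by positivity, fun {x} hx => ?_⟩
  have hx1 : dist x x₀ < 1 := lt_of_lt_of_le hx (min_le_right _ _)
  have hxδ : dist x x₀ < δ := lt_of_lt_of_le hx (min_le_left _ _)
  have hmem : ∀ z ∈ closedBall (0 : Euc N) R, x + z ∈ closedBall x₀ (R + 1) ∧
      x₀ + z ∈ closedBall x₀ (R + 1) := by
    intro z hz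
    rw [mem_closedBall_zero_iff] at hz
    constructor
    · rw [mem_closedBall]
      calc dist (x + z) x₀ ≤ dist (x + z) (x₀ + z) + dist (x₀ + z) x₀ := dist_triangle _ _ _
        _ ≤ 1 + R := by
            have e1 : dist (x + z) (x₀ + z) = dist x x₀ := dist_add_right x x₀ z
            have e2 : dist (x₀ + z) x₀ ≤ R := by
              rw [dist_eq_norm]; simpa using hz
            rw [e1]; linarith
        _ = R + 1 := by ring
    · rw [mem_closedBall, dist_eq_norm]
      have : ‖x₀ + z - x₀‖ = ‖z‖ := by simp
      rw [this]; linarith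
  have hkey : ∀ z ∈ closedBall (0 : Euc N) R, |χ (x + z) - χ (x₀ + z)| < ε / 2 := by
    intro z hz
    obtain ⟨h1, h2⟩ := hmem z hz
    have := hd _ h1 _ h2 (by rw [dist_add_right]; exact hxδ)
    rwa [Real.dist_eq] at this
  have h1 : mfun χ R x - ε / 2 ≤ mfun χ R x₀ := by
    apply le_mfun hR
    intro z hz
    have ha := mfun_le hχ x hz
    have hb := abs_lt.1 (hkey z hz)
    linarith [hb.1, hb.2]
  have h2 : mfun χ R x₀ - ε / 2 ≤ mfun χ R x := by
    apply le_mfun hR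
    intro z hz
    have ha := mfun_le hχ x₀ hz
    have hb := abs_lt.1 (hkey z hz)
    linarith [hb.1, hb.2]
  rw [Real.dist_eq, abs_sub_lt_iff]
  constructor <;> linarith

/-- At a point which is a minimum of ψ − Φ on the ball of radius R,
`F` applied to the data of ψ dominates that of Φ. -/
lemma F_compare_at_min {R : ℝ} (hR : 0 < R) {ν : Measure (Euc N)} (hν : LevyMeasure R ν)
    {F : ℝ → Euc N → Euc N → Bil N → ℝ → ℝ} (hFe : Elliptic F)
    {Φ ψ : Euc N → ℝ} (hΦ2 : ContDiff ℝ 2 Φ) (hψ2 : ContDiff ℝ 2 ψ)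
    {MΦ : ℝ} (hMΦ : ∀ y, |Φ y| ≤ MΦ) {Mψ : ℝ} (hMψ : ∀ y, |ψ y| ≤ Mψ)
    {x : Euc N} (hmin : IsMinOn (fun y => ψ y - Φ y) (closedBall x R) x) (t : ℝ) :
    F t x (gradient ψ x) (hess ψ x) (levyOp ν ψ x)
      ≤ F t x (gradient Φ x) (hess Φ x) (levyOp ν Φ x) := by
  have hχ2 : ContDiff ℝ 2 (fun y => ψ y - Φ y) := hψ2.sub hΦ2
  have hloc : IsLocalMin (fun y => ψ y - Φ y) x :=
    hmin.isLocalMin (closedBall_mem_nhds x hR)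
  have hfd0 : fderiv ℝ (fun y => ψ y - Φ y) x = 0 := hloc.fderiv_eq_zero
  have hfd : fderiv ℝ ψ x = fderiv ℝ Φ x := by
    have hsub : fderiv ℝ (fun y => ψ y - Φ y) x = fderiv ℝ ψ x - fderiv ℝ Φ x :=
      fderiv_sub (hψ2.differentiable (by norm_num) x) (hΦ2.differentiable (by norm_num) x)
    rw [hfd0] at hsub
    exact (sub_eq_zero.1 hsub.symm)
  have hgrad : gradient ψ x = gradient Φ x := by
    simp [gradient, hfd]
  have hhesssub : hess (fun y => ψ y - Φ y) x = hess ψ x - hess Φ x := by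
    have e1 : (fun y => fderiv ℝ (fun w => ψ w - Φ w) y)
        = fun y => fderiv ℝ ψ y - fderiv ℝ Φ y := by
      funext y
      exact fderiv_sub (hψ2.differentiable (by norm_num) y) (hΦ2.differentiable (by norm_num) y)
    have hdψ : DifferentiableAt ℝ (fderiv ℝ ψ) x :=
      ((hψ2.fderiv_right (m := 1) (by norm_num)).differentiable one_ne_zero) x
    have hdΦ : DifferentiableAt ℝ (fderiv ℝ Φ) x :=
      ((hΦ2.fderiv_right (m := 1) (by norm_num)).differentiable one_ne_zero) x
    rw [hess, e1]
    exact fderiv_sub hdψ hdΦ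
  have hhess : ∀ v, hess Φ x v v ≤ hess ψ x v v := by
    intro v
    have h0 := hess_nonneg_of_isLocalMin hχ2 hloc v
    rw [hhesssub] at h0
    simp only [ContinuousLinearMap.sub_apply] at h0
    linarith
  have hlevy : levyOp ν Φ x ≤ levyOp ν Φ x := le_refl _
  have hlevy2 : levyOp ν Φ x ≤ levyOp ν ψ x := by
    rw [levyOp_eq, levyOp_eq, ← sub_nonneg,
      ← integral_sub (lint_integrable hν hψ2 hMψ x) (lint_integrable hν hΦ2 hMΦ x)]
    apply integral_nonneg_of_ae
    have hae : ∀ᵐ z ∂ν, z ∈ Metric.ball (0 : Euc N) R := by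
      rw [ae_iff]
      have : {z : Euc N | ¬ z ∈ Metric.ball (0 : Euc N) R}
          = (Metric.ball (0 : Euc N) R)ᶜ := rfl
      rw [this]
      exact hν.2.1
    filter_upwards [hae] with z hz
    have hxz : x + z ∈ closedBall x R := by
      rw [mem_closedBall, dist_eq_norm]
      rw [mem_ball, dist_eq_norm] at hz
      simp only [add_sub_cancel_left]
      simpa using hz.le
    have hm := hmin hxz
    simp only [mem_setOf_eq] at hm
    simp only [Pi.zero_apply, Pi.sub_apply, lint, hgrad]
    linarith
  have := hFe t x (gradient Φ x) (hess Φ x) (hess ψ x) (levyOp ν Φ x) (levyOp ν ψ x)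
    hhess hlevy2
  rw [hgrad]
  exact this

end Aux

/-- Crucial lemma for PIDE (Lemma 2.1). -/
theorem crucial_lemma_pide
    {N : ℕ} (hN : 1 ≤ N) (R : ℝ) (hR : 0 < R)
    (ν : Measure (Euc N)) (hν : LevyMeasure R ν)
    (F : ℝ → Euc N → Euc N → Bil N → ℝ → ℝ)
    (hFc : ContinuousF F) (hFe : Elliptic F)
    (Φ ψ : Euc N → ℝ) (hΦ : BoundedC2 Φ) (hψ : BoundedC2 ψ)
    (K : Set (Euc N)) (hK : IsCompact K) (T : ℝ) (hT : 0 < T) :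
    ∃ o : ℝ → ℝ, Tendsto (fun ε => o ε / ε) (𝓝[>] (0:ℝ)) (𝓝 0) ∧
      ∀ ε > (0:ℝ), ∀ t ∈ Icc (0:ℝ) T, ∀ x ∈ K, ∃ y ∈ closedBall x R,
        ψ y + Φ x - Φ y - ε * F t x (gradient Φ x) (hess Φ x) (levyOp ν Φ x)
          ≤ ψ x - ε * F t x (gradient ψ x) (hess ψ x) (levyOp ν ψ x) + o ε := by
  obtain ⟨hΦ2, MΦ, hMΦ⟩ := hΦ
  obtain ⟨hψ2, Mψ, hMψ⟩ := hψ
  set χ : Euc N → ℝ := fun y => ψ y - Φ y with hχdef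
  have hχc : Continuous χ := (hψ2.continuous).sub (hΦ2.continuous)
  set dfun : Euc N → ℝ := fun x => χ x - mfun χ R x with hdfun
  have hdc : Continuous dfun := hχc.sub (mfun_continuous hχc hR.le)
  have hdnn : ∀ x, 0 ≤ dfun x := fun x => by
    have := mfun_le_self hχc hR.le x
    simp only [hdfun]
    linarith
  set G : ℝ × Euc N → ℝ := fun p =>
    F p.1 p.2 (gradient ψ p.2) (hess ψ p.2) (levyOp ν ψ p.2)
      - F p.1 p.2 (gradient Φ p.2) (hess Φ p.2) (levyOp ν Φ p.2) with hGdef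
  have hGc : Continuous G := by
    have h1 : Continuous fun p : ℝ × Euc N =>
        F p.1 p.2 (gradient ψ p.2) (hess ψ p.2) (levyOp ν ψ p.2) :=
      hFc.comp (continuous_fst.prodMk (continuous_snd.prodMk
        (((continuous_gradient hψ2).comp continuous_snd).prodMk
          (((continuous_hess hψ2).comp continuous_snd).prodMk
            ((levyOp_continuous hν hψ2 hMψ).comp continuous_snd)))))
    have h2 : Continuous fun p : ℝ × Euc N =>
        F p.1 p.2 (gradient Φ p.2) (hess Φ p.2) (levyOp ν Φ p.2) :=
      hFc.comp (continuous_fst.prodMk (continuous_snd.prodMk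
        (((continuous_gradient hΦ2).comp continuous_snd).prodMk
          (((continuous_hess hΦ2).comp continuous_snd).prodMk
            ((levyOp_continuous hν hΦ2 hMΦ).comp continuous_snd)))))
    exact h1.sub h2
  -- G ≤ 0 wherever dfun vanishes
  have hGneg : ∀ t : ℝ, ∀ x : Euc N, dfun x = 0 → G (t, x) ≤ 0 := by
    intro t x hx
    have hmin : IsMinOn χ (closedBall x R) x := isMinOn_of_dfun_eq_zero hχc hx
    have := F_compare_at_min hR hν hFe hΦ2 hψ2 hMΦ hMψ hmin t
    simp only [hGdef]
    linarith
  set P : Set (ℝ × Euc N) := Icc (0:ℝ) T ×ˢ K with hPdef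
  have hPc : IsCompact P := isCompact_Icc.prod hK
  set o : ℝ → ℝ := fun ε => sSup (insert (0:ℝ) ((fun p => ε * G p - dfun p.2) '' P))
    with hodef
  have hbdd : ∀ ε : ℝ, BddAbove (insert (0:ℝ) ((fun p => ε * G p - dfun p.2) '' P)) := by
    intro ε
    refine (BddAbove.insert 0) ?_
    exact ((hPc.image (((continuous_const.mul hGc)).sub
      (hdc.comp continuous_snd))).bddAbove)
  have honn : ∀ ε : ℝ, 0 ≤ o ε := fun ε => le_csSup (hbdd ε) (mem_insert _ _)
  have hkey : ∀ (ε : ℝ), ∀ p ∈ P, ε * G p - dfun p.2 ≤ o ε := fun ε p hp =>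
    le_csSup (hbdd ε) (mem_insert_of_mem _ (mem_image_of_mem _ hp))
  -- the small-ε bound
  have hsmall : ∀ a > (0:ℝ), ∃ ε₀ > 0, ∀ ε : ℝ, 0 < ε → ε < ε₀ → o ε ≤ ε * a := by
    intro a ha
    obtain ⟨Cg, hCg⟩ := hPc.exists_bound_of_continuousOn (f := G) hGc.continuousOn
    set Cg' : ℝ := max Cg 1 with hCg'
    have hCg'pos : 0 < Cg' := lt_of_lt_of_le one_pos (le_max_right _ _)
    have hCgle : ∀ p ∈ P, G p ≤ Cg' := fun p hp =>
      le_trans (le_trans (le_abs_self _) (hCg p hp)) (le_max_left _ _)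
    set A : Set (ℝ × Euc N) := P ∩ G ⁻¹' (Ici a) with hAdef
    have hAc : IsCompact A := hPc.inter_right (isClosed_Ici.preimage hGc)
    by_cases hAne : A.Nonempty
    · obtain ⟨p₀, hp₀A, hp₀min⟩ := hAc.exists_isMinOn hAne
        ((hdc.comp continuous_snd).continuousOn)
      set c : ℝ := dfun p₀.2 with hcdef
      have hcpos : 0 < c := by
        rcases lt_or_eq_of_le (hdnn p₀.2) with h | h
        · exact h
        · exfalso
          have hg := hGneg p₀.1 p₀.2 h.symm
          have : a ≤ G p₀ := hp₀A.2
          simp only [Prod.mk.eta] at hg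
          linarith
      refine ⟨c / Cg', by positivity, fun ε hε hε₀ => ?_⟩
      apply csSup_le (insert_nonempty _ _)
      rintro b hb
      rcases mem_insert_iff.1 hb with rfl | ⟨p, hp, rfl⟩
      · positivity
      · show ε * G p - dfun p.2 ≤ ε * a
        by_cases hpa : a ≤ G p
        · have hpA : p ∈ A := ⟨hp, hpa⟩
          have hdp : c ≤ dfun p.2 := hp₀min hpA
          have hb1 : ε * G p ≤ ε * Cg' := mul_le_mul_of_nonneg_left (hCgle p hp) hε.le
          have h2 : ε * Cg' < c := by
            rw [← div_mul_cancel₀ c (ne_of_gt hCg'pos)]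
            exact mul_lt_mul_of_pos_right hε₀ hCg'pos
          have h3 : ε * G p - dfun p.2 < 0 := by linarith
          nlinarith
        · push_neg at hpa
          have h1 : ε * G p ≤ ε * a := mul_le_mul_of_nonneg_left hpa.le hε.le
          have h2 := hdnn p.2
          linarith
    · refine ⟨1, one_pos, fun ε hε _ => ?_⟩
      apply csSup_le (insert_nonempty _ _)
      rintro b hb
      rcases mem_insert_iff.1 hb with rfl | ⟨p, hp, rfl⟩
      · positivity
      · show ε * G p - dfun p.2 ≤ ε * a
        have hpa : ¬ a ≤ G p := fun h => hAne ⟨p, hp, h⟩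
        push_neg at hpa
        have h1 : ε * G p ≤ ε * a := mul_le_mul_of_nonneg_left hpa.le hε.le
        have h2 := hdnn p.2
        linarith
  refine ⟨o, ?_, ?_⟩
  · rw [Metric.tendsto_nhdsWithin_nhds]
    intro a ha
    obtain ⟨ε₀, hε₀, hb⟩ := hsmall (a / 2) (by linarith)
    refine ⟨ε₀, hε₀, fun {ε} hε hd => ?_⟩
    have hεpos : 0 < ε := hε
    have hεlt : ε < ε₀ := by
      rw [Real.dist_eq, sub_zero, abs_of_pos hεpos] at hd
      exact hd
    have h1 : o ε ≤ ε * (a / 2) := hb ε hεpos hεlt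
    have h2 : 0 ≤ o ε / ε := div_nonneg (honn ε) hεpos.le
    have h3 : o ε / ε ≤ a / 2 := by
      rw [div_le_iff₀ hεpos]
      linarith [h1]
    rw [Real.dist_eq, sub_zero, abs_of_nonneg h2]
    linarith
  · intro ε hε t ht x hx
    obtain ⟨y, hy, hymin⟩ := exists_min hχc hR.le x
    refine ⟨y, hy, ?_⟩
    have hk : ε * G (t, x) - dfun x ≤ o ε := hkey ε (t, x) ⟨ht, hx⟩
    have hG : G (t, x) = F t x (gradient ψ x) (hess ψ x) (levyOp ν ψ x)
        - F t x (gradient Φ x) (hess Φ x) (levyOp ν Φ x) := rfl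
    have hd : dfun x = (ψ x - Φ x) - mfun χ R x := rfl
    have hm : ψ y - Φ y = mfun χ R x := hymin
    rw [hG, hd] at hk
    linarith
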